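/- Fix τ > 0 and ε > 0, and define Φ_{τ,ε} : ℝ² → ℝ² by Φ_{τ,ε}(q,s) = (q′,s′), where u = q + (τ/2)s, s′ = e^{ετ(1−u²)}(s − (τ/2)u) − (τ/2)u, and q′ = q + (τ/2)s + (τ/2)s′. Then Φ_{τ,ε} is differentiable at the origin, and its Jacobian matrix J at (0,0) satisfies trace(J) = (2 − τ²)(e^{ετ} + 1)/2 and det(J) = e^{ετ}. In particular det(J) > 1, so at least one eigenvalue of J has absolute value greater than 1 and the fixed point (0,0) is unstable. -/

import Mathlib

-- auxiliary: eigenvalue lemma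
lemma quad_root_big (T D : ℝ) (hD : (1:ℝ) < D) :
    ∃ z : ℂ, ‖z‖ > 1 ∧
      z ^ 2 - (T : ℂ) * z + (D : ℂ) = 0 := by
  obtain ⟨w, hw⟩ := IsAlgClosed.exists_pow_nat_eq ((T:ℂ)^2 - 4*(D:ℂ)) (n := 2) (by norm_num)
  set z₁ : ℂ := ((T:ℂ) + w)/2
  set z₂ : ℂ := ((T:ℂ) - w)/2
  have hsum : z₁ + z₂ = (T:ℂ) := by simp [z₁, z₂]; ring
  have hprod : z₁ * z₂ = (D:ℂ) := by
    have : z₁ * z₂ = ((T:ℂ)^2 - w^2)/4 := by ring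
    rw [this, hw]; ring
  have hroot1 : z₁ ^ 2 - (T:ℂ) * z₁ + (D:ℂ) = 0 := by
    rw [← hsum, ← hprod]; ring
  have hroot2 : z₂ ^ 2 - (T:ℂ) * z₂ + (D:ℂ) = 0 := by
    rw [← hsum, ← hprod]; ring
  have habs : ‖z₁‖ * ‖z₂‖ = D := by
    rw [← norm_mul, hprod, Complex.norm_real, Real.norm_eq_abs, abs_of_pos (by linarith)]
  by_cases h1 : ‖z₁‖ > 1
  · exact ⟨z₁, h1, hroot1⟩
  · refine ⟨z₂, ?_, hroot2⟩
    push_neg at h1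
    have := norm_nonneg z₂
    nlinarith [habs]

theorem vdp_splitting_integrator_jacobian_origin
    (τ ε : ℝ) (hτ : τ > 0) (hε : ε > 0)
    (Φ : ℝ × ℝ → ℝ × ℝ)
    (hΦ : ∀ q s : ℝ, Φ (q, s) =
      (q + (τ / 2) * s + (τ / 2) *
          (Real.exp (ε * τ * (1 - (q + (τ / 2) * s) ^ 2)) *
              (s - (τ / 2) * (q + (τ / 2) * s)) - (τ / 2) * (q + (τ / 2) * s)),
        Real.exp (ε * τ * (1 - (q + (τ / 2) * s) ^ 2)) *
            (s - (τ / 2) * (q + (τ / 2) * s)) - (τ / 2) * (q + (τ / 2) * s))) :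
    ∃ L : ℝ × ℝ →L[ℝ] ℝ × ℝ, HasFDerivAt Φ L ((0 : ℝ), (0 : ℝ)) ∧
      (L (1, 0)).1 + (L (0, 1)).2 = (2 - τ ^ 2) * (Real.exp (ε * τ) + 1) / 2 ∧
      (L (1, 0)).1 * (L (0, 1)).2 - (L (0, 1)).1 * (L (1, 0)).2 = Real.exp (ε * τ) ∧
      (L (1, 0)).1 * (L (0, 1)).2 - (L (0, 1)).1 * (L (1, 0)).2 > 1 ∧
      ∃ z : ℂ, ‖z‖ > 1 ∧
        z ^ 2 - (((L (1, 0)).1 + (L (0, 1)).2 : ℝ) : ℂ) * z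
          + (((L (1, 0)).1 * (L (0, 1)).2 - (L (0, 1)).1 * (L (1, 0)).2 : ℝ) : ℂ) = 0 := by
  have hΦfun : Φ = fun p : ℝ × ℝ =>
      (p.1 + (τ / 2) * p.2 + (τ / 2) *
          (Real.exp (ε * τ * (1 - (p.1 + (τ / 2) * p.2) ^ 2)) *
              (p.2 - (τ / 2) * (p.1 + (τ / 2) * p.2)) - (τ / 2) * (p.1 + (τ / 2) * p.2)),
        Real.exp (ε * τ * (1 - (p.1 + (τ / 2) * p.2) ^ 2)) *
            (p.2 - (τ / 2) * (p.1 + (τ / 2) * p.2)) - (τ / 2) * (p.1 + (τ / 2) * p.2)) := by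
    funext p; rw [← hΦ p.1 p.2]
  subst hΦfun
  have hu : HasFDerivAt (fun p : ℝ × ℝ => p.1 + (τ/2) * p.2)
      (ContinuousLinearMap.fst ℝ ℝ ℝ + (τ/2) • ContinuousLinearMap.snd ℝ ℝ ℝ)
      ((0:ℝ), (0:ℝ)) := by
    have h1 := hasFDerivAt_fst (𝕜 := ℝ) (p := ((0:ℝ),(0:ℝ)))
    have h2 := (hasFDerivAt_snd (𝕜 := ℝ) (p := ((0:ℝ),(0:ℝ)))).const_mul (τ/2)
    exact h1.add h2
  have hsq := hu.mul hu
  simp only [← pow_two] at hsq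
  have hg := (hsq.const_sub 1).const_mul (ε*τ)
  have hE := hg.exp
  have hv := (hasFDerivAt_snd (𝕜 := ℝ) (p := ((0:ℝ),(0:ℝ)))).sub (hu.const_mul (τ/2))
  have hs := (hE.mul hv).sub (hu.const_mul (τ/2))
  have hq := hu.add (hs.const_mul (τ/2))
  have hL := hq.prodMk hs
  refine ⟨_, hL, ?_, ?_, ?_, ?_⟩
  case refine_4 =>
    refine quad_root_big _ _ ?_
    simp only [ContinuousLinearMap.prod_apply, ContinuousLinearMap.add_apply,
      ContinuousLinearMap.coe_fst', ContinuousLinearMap.coe_snd',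
      ContinuousLinearMap.smul_apply, ContinuousLinearMap.neg_apply, smul_eq_mul]
    norm_num
    ring_nf
    exact Real.one_lt_exp_iff.mpr (by positivity)
  all_goals
    simp only [ContinuousLinearMap.prod_apply, ContinuousLinearMap.add_apply,
      ContinuousLinearMap.coe_fst', ContinuousLinearMap.coe_snd',
      ContinuousLinearMap.smul_apply, ContinuousLinearMap.neg_apply, smul_eq_mul]
    norm_num
  · ring
  · ring
  · ring_nf
    exact Real.one_lt_exp_iff.mpr (by positivity)
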